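/- For every integer n ≥ 1 and every x > 0, the quantity φ_n(x) = ∫₀^π e^{-2x sin η} cos(2nη) dη is strictly positive. -/

import Mathlib

open Real

/-- The universal function `φ_n`. -/
noncomputable def phi (n : ℕ) (x : ℝ) : ℝ :=
  ∫ η in (0:ℝ)..π, Real.exp (-2 * x * Real.sin η) * Real.cos (2 * n * η)

lemma sum_range_two_mul (n : ℕ) (a : ℕ → ℝ) :
    ∑ k ∈ Finset.range (2 * n), a k = ∑ j ∈ Finset.range n, (a (2*j) + a (2*j+1)) := by
  induction n with
  | zero => simp
  | succ m ih =>
    rw [Nat.mul_succ, Finset.sum_range_succ, Finset.sum_range_succ, Finset.sum_range_succ, ih,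
      add_assoc]

lemma h_strictAnti (x : ℝ) (hx : 0 < x) :
    StrictAntiOn (fun η : ℝ => Real.cos η * Real.exp (-2 * x * Real.sin η)) (Set.Icc 0 π) := by
  have hderiv : ∀ η : ℝ, HasDerivAt (fun η : ℝ => Real.cos η * Real.exp (-2 * x * Real.sin η))
      (-Real.sin η * Real.exp (-2 * x * Real.sin η)
        + Real.cos η * (Real.exp (-2 * x * Real.sin η) * (-2 * x * Real.cos η))) η := by
    intro η
    have h1 : HasDerivAt (fun η : ℝ => -2 * x * Real.sin η) (-2 * x * Real.cos η) η :=
      (Real.hasDerivAt_sin η).const_mul (-2 * x)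
    exact (Real.hasDerivAt_cos η).mul h1.exp
  apply strictAntiOn_of_deriv_neg (convex_Icc 0 π)
  · exact (Real.continuous_cos.mul (Real.continuous_exp.comp (by continuity))).continuousOn
  · intro η hη
    rw [interior_Icc] at hη
    rw [(hderiv η).deriv]
    have hs : 0 < Real.sin η := Real.sin_pos_of_pos_of_lt_pi hη.1 hη.2
    have he : 0 < Real.exp (-2 * x * Real.sin η) := Real.exp_pos _
    nlinarith [mul_pos hs he, mul_nonneg (mul_nonneg hx.le (sq_nonneg (Real.cos η))) he.le]

set_option maxHeartbeats 1000000 in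
/-- Positivity of `φ_n` on `(0,∞)`. -/
theorem stmt_2 (n : ℕ) (hn : 1 ≤ n) (x : ℝ) (hx : 0 < x) : 0 < phi n x := by
  set c : ℝ := 2 * n with hc_def
  have hn0 : (0:ℝ) < n := by exact_mod_cast hn
  have hc : (0:ℝ) < c := by positivity
  set g : ℝ → ℝ := fun η => Real.exp (-2 * x * Real.sin η) with hg_def
  set h : ℝ → ℝ := fun η => Real.cos η * g η with hh_def
  -- Step 1: integration by parts
  have hu : ∀ η ∈ Set.uIcc (0:ℝ) π, HasDerivAt g (-2 * x * Real.cos η * g η) η := by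
    intro η _
    have h1 : HasDerivAt (fun η : ℝ => -2 * x * Real.sin η) (-2 * x * Real.cos η) η :=
      (Real.hasDerivAt_sin η).const_mul (-2 * x)
    simpa [hg_def, mul_comm] using h1.exp
  have hv : ∀ η ∈ Set.uIcc (0:ℝ) π,
      HasDerivAt (fun η => Real.sin (c * η) / c) (Real.cos (c * η)) η := by
    intro η _
    have h1 : HasDerivAt (fun η : ℝ => c * η) c η := by
      simpa using (hasDerivAt_id η).const_mul c
    have := (h1.sin).div_const c
    rw [mul_div_cancel_right₀ _ hc.ne'] at this
    exact this
  have hconth : Continuous h := by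
    apply Real.continuous_cos.mul
    exact Real.continuous_exp.comp (by continuity)
  have hcontu' : Continuous (fun η : ℝ => -2 * x * Real.cos η * g η) := by
    apply Continuous.mul (by continuity)
    exact Real.continuous_exp.comp (by continuity)
  have hibp := intervalIntegral.integral_mul_deriv_eq_deriv_mul hu hv
    (hcontu'.intervalIntegrable (0:ℝ) π)
    ((Real.continuous_cos.comp (by continuity)).intervalIntegrable (0:ℝ) π)
  have hsinpi : Real.sin (c * π) = 0 := by
    rw [hc_def]
    have : (2 : ℝ) * n * π = ((2 * n : ℕ) : ℝ) * π := by push_cast; ring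
    rw [this, Real.sin_nat_mul_pi]
  have hphi : phi n x = (2 * x / c) * ∫ η in (0:ℝ)..π, h η * Real.sin (c * η) := by
    have : phi n x = ∫ η in (0:ℝ)..π, g η * Real.cos (c * η) := rfl
    rw [this, hibp, hsinpi]
    simp only [mul_zero, Real.sin_zero, zero_div, zero_mul, sub_zero, zero_sub]
    rw [← intervalIntegral.integral_const_mul, ← intervalIntegral.integral_neg]
    congr 1
    ext η
    simp only [hh_def]
    field_simp
  rw [hphi]
  apply mul_pos (by positivity)
  -- Step 2: positivity of J = ∫ h sin(cη)
  set δ : ℝ := π / c with hδ_def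
  have hδ : 0 < δ := by positivity
  have hcδ : c * δ = π := by rw [hδ_def]; field_simp
  set f : ℝ → ℝ := fun η => h η * Real.sin (c * η) with hf_def
  have hcontf : Continuous f := hconth.mul (Real.continuous_sin.comp (by continuity))
  -- split into 2n pieces
  have hsplit : ∫ η in (0:ℝ)..π, f η
      = ∑ k ∈ Finset.range (2 * n), ∫ η in ((k:ℝ)*δ)..(((k+1:ℕ):ℝ)*δ), f η := by
    have key := intervalIntegral.sum_integral_adjacent_intervals
      (a := fun k : ℕ => (k:ℝ) * δ) (n := 2 * n) (f := f) (μ := MeasureTheory.volume)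
      (fun k _ => hcontf.intervalIntegrable _ _)
    have h2 : ((2*n:ℕ):ℝ)*δ = π := by
      push_cast
      rw [hc_def] at hcδ
      linarith [hcδ]
    beta_reduce at key
    rw [show ((0:ℕ):ℝ)*δ = 0 by simp, h2] at key
    exact key.symm
  -- compute each piece
  have hintk : ∀ k : ℕ, IntervalIntegrable (fun t => h (t + (k:ℝ)*δ) * Real.sin (c*t))
      MeasureTheory.volume 0 δ := by
    intro k
    apply Continuous.intervalIntegrable
    exact (hconth.comp (continuous_id.add continuous_const)).mul
      (Real.continuous_sin.comp (continuous_const.mul continuous_id))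
  set A : ℕ → ℝ := fun k => ∫ t in (0:ℝ)..δ, h (t + (k:ℝ)*δ) * Real.sin (c*t) with hA_def
  have hterm : ∀ k : ℕ, (∫ η in ((k:ℝ)*δ)..(((k+1:ℕ):ℝ)*δ), f η) = (-1:ℝ)^k * A k := by
    intro k
    have hcomp := intervalIntegral.integral_comp_add_right (a := (0:ℝ)) (b := δ)
      (f := f) ((k:ℝ)*δ)
    rw [show (0:ℝ)+(k:ℝ)*δ = (k:ℝ)*δ by ring,
      show δ+(k:ℝ)*δ = ((k+1:ℕ):ℝ)*δ by push_cast; ring] at hcomp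
    rw [← hcomp, hA_def, ← intervalIntegral.integral_const_mul]
    congr 1
    ext t
    simp only [hf_def]
    have hsin : Real.sin (c*(t + (k:ℝ)*δ)) = (-1:ℝ)^k * Real.sin (c*t) := by
      rw [show c*(t + (k:ℝ)*δ) = c*t + (k:ℝ)*π by rw [← hcδ]; ring,
        Real.sin_add_nat_mul_pi]
    rw [hsin]
    ring
  rw [hsplit, Finset.sum_congr rfl (fun k _ => hterm k), sum_range_two_mul]
  -- each pair is positive
  apply Finset.sum_pos _ ⟨0, Finset.mem_range.2 (by omega)⟩
  intro j hj
  have hjn : j < n := Finset.mem_range.1 hj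
  have hpair : (-1:ℝ)^(2*j) * A (2*j) + (-1:ℝ)^(2*j+1) * A (2*j+1)
      = ∫ t in (0:ℝ)..δ, (h (t + (2*j:ℕ)*δ) - h (t + (2*j+1:ℕ)*δ)) * Real.sin (c*t) := by
    have e1 : (-1:ℝ)^(2*j) = 1 := by rw [pow_mul]; norm_num
    have e2 : (-1:ℝ)^(2*j+1) = -1 := by rw [pow_succ, pow_mul]; norm_num
    rw [e1, e2, hA_def]
    simp only [one_mul, neg_one_mul]
    rw [← sub_eq_add_neg, ← intervalIntegral.integral_sub (hintk (2*j)) (hintk (2*j+1))]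
    congr 1
    ext t
    push_cast
    ring
  rw [hpair]
  apply intervalIntegral.intervalIntegral_pos_of_pos_on
  · apply Continuous.intervalIntegrable
    exact (((hconth.comp (continuous_id.add continuous_const)).sub
      (hconth.comp (continuous_id.add continuous_const))).mul
      (Real.continuous_sin.comp (continuous_const.mul continuous_id)))
  · intro t ht
    obtain ⟨ht0, htδ⟩ := ht
    have hsin : 0 < Real.sin (c*t) := by
      apply Real.sin_pos_of_pos_of_lt_pi (by positivity)
      calc c*t < c*δ := by apply mul_lt_mul_of_pos_left htδ hc
        _ = π := hcδ
    apply mul_pos _ hsin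
    have hj' : (j:ℝ) + 1 ≤ (n:ℝ) := by exact_mod_cast hjn
    have hπ : (2*(j:ℝ)+2)*δ ≤ π := by
      rw [← hcδ, hc_def]
      have h2 : 2*(j:ℝ)+2 ≤ 2*(n:ℝ) := by linarith
      exact mul_le_mul_of_nonneg_right h2 hδ.le
    have hab : t + ((2*j:ℕ):ℝ)*δ < t + ((2*j+1:ℕ):ℝ)*δ := by push_cast; linarith [hδ]
    have ha : t + ((2*j:ℕ):ℝ)*δ ∈ Set.Icc 0 π := by
      constructor
      · positivity
      · push_cast
        linarith [hπ, htδ, hδ]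
    have hb : t + ((2*j+1:ℕ):ℝ)*δ ∈ Set.Icc 0 π := by
      constructor
      · positivity
      · push_cast
        linarith [hπ, htδ, hδ]
    have hlt := h_strictAnti x hx ha hb hab
    simp only [hh_def, hg_def]
    dsimp only at hlt ⊢
    linarith
  · exact hδ
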